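/- Let v_1, v_2, …, v_n be a smallest-last ordering of the vertices of a finite simple graph G (i.e., for each i, v_i has minimum degree in the induced subgraph G[{v_i, …, v_n}]). Let d̃_i denote the degree of v_i in G[{v_i, …, v_n}]. Then for every i, ζ(v_i) = max_{1 ≤ j ≤ i} d̃_j. -/

import Mathlib

open SimpleGraph Finset

/-- The minimum degree of a subgraph `H` of `G`: the infimum over vertices of `H`
of the number of neighbors in `H`. -/
noncomputable def subMinDeg {V : Type*} (G : SimpleGraph V) (H : G.Subgraph) : ℕ :=
  sInf ((fun v => (H.neighborSet v).ncard) '' H.verts)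

/-- The degenerate degree `ζ(v)`: the maximum of `δ(H)` over all subgraphs `H` of `G`
containing `v`. -/
noncomputable def zeta {V : Type*} (G : SimpleGraph V) (v : V) : ℕ :=
  sSup {n | ∃ H : G.Subgraph, v ∈ H.verts ∧ subMinDeg G H = n}

/-- A vertex `u` is cheap if `ζ(u) = deg_G(u)` and `ζ(u) ≤ ζ(w)` for every `w ∈ N[u]`. -/
def Cheap {V : Type*} (G : SimpleGraph V) (u : V) : Prop :=
  zeta G u = (G.neighborSet u).ncard ∧ ∀ w, G.Adj u w → zeta G u ≤ zeta G w

/-- The induced subgraph on vertices `≥ j`. -/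
def indSub {n : ℕ} (G : SimpleGraph (Fin n)) (j : Fin n) : G.Subgraph where
  verts := {k | j ≤ k}
  Adj a b := j ≤ a ∧ j ≤ b ∧ G.Adj a b
  adj_sub h := h.2.2
  edge_vert h := h.1
  symm := ⟨fun a b h => ⟨h.2.1, h.1, h.2.2.symm⟩⟩

lemma subMinDeg_indSub {n : ℕ} (G : SimpleGraph (Fin n)) [DecidableRel G.Adj]
    (dt : Fin n → ℕ)
    (hdt : ∀ i, dt i = (Finset.univ.filter fun j => i ≤ j ∧ G.Adj i j).card)
    (hSL : ∀ i j : Fin n, i ≤ j →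
      dt i ≤ (Finset.univ.filter fun k => i ≤ k ∧ G.Adj j k).card)
    (j : Fin n) : subMinDeg G (indSub G j) = dt j := by
  have hnb : ∀ v : Fin n, j ≤ v →
      ((indSub G j).neighborSet v).ncard
        = (Finset.univ.filter fun k => j ≤ k ∧ G.Adj v k).card := by
    intro v hv
    rw [← Set.ncard_coe_finset]
    congr 1
    ext k
    simp [indSub, SimpleGraph.Subgraph.neighborSet, hv]
  apply le_antisymm
  · refine Nat.sInf_le ⟨j, le_refl j, ?_⟩
    simp only
    rw [hnb j le_rfl, hdt]
  · refine le_csInf ⟨_, ⟨j, le_refl j, rfl⟩⟩ ?_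
    rintro x ⟨v, hv, rfl⟩
    simp only
    rw [hnb v hv]
    exact hSL j v hv

theorem stmt_1 {n : ℕ} (G : SimpleGraph (Fin n)) [DecidableRel G.Adj]
    (dt : Fin n → ℕ)
    (hdt : ∀ i, dt i = (Finset.univ.filter fun j => i ≤ j ∧ G.Adj i j).card)
    (hSL : ∀ i j : Fin n, i ≤ j →
      dt i ≤ (Finset.univ.filter fun k => i ≤ k ∧ G.Adj j k).card)
    (i : Fin n) :
    zeta G i = (Finset.Iic i).sup dt := by
  have hbdd : BddAbove {m | ∃ H : G.Subgraph, i ∈ H.verts ∧ subMinDeg G H = m} := by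
    refine ⟨n, ?_⟩
    rintro m ⟨H, hi, rfl⟩
    calc subMinDeg G H ≤ (H.neighborSet i).ncard := Nat.sInf_le ⟨i, hi, rfl⟩
      _ ≤ n := by
        have := Set.ncard_le_ncard (Set.subset_univ (H.neighborSet i)) Set.finite_univ
        simpa [Set.ncard_univ] using this
  apply le_antisymm
  · refine csSup_le ⟨dt i, indSub G i, le_refl i, subMinDeg_indSub G dt hdt hSL i⟩ ?_
    rintro m ⟨H, hi, rfl⟩
    obtain ⟨j₀, hj₀mem, hj₀min⟩ :=
      Set.exists_min_image H.verts id (Set.toFinite _) ⟨i, hi⟩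
    have hle : subMinDeg G H ≤ (H.neighborSet j₀).ncard := Nat.sInf_le ⟨j₀, hj₀mem, rfl⟩
    have hsub : (H.neighborSet j₀) ⊆
        ↑(Finset.univ.filter fun k => j₀ ≤ k ∧ G.Adj j₀ k) := by
      intro w hw
      simp only [Finset.coe_filter, Set.mem_setOf_eq, Finset.mem_univ, true_and]
      exact ⟨hj₀min w (H.edge_vert hw.symm), H.adj_sub hw⟩
    calc subMinDeg G H ≤ (H.neighborSet j₀).ncard := hle
      _ ≤ _ := Set.ncard_le_ncard hsub (Finset.finite_toSet _)
      _ = dt j₀ := by rw [Set.ncard_coe_finset, hdt]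
      _ ≤ (Finset.Iic i).sup dt := Finset.le_sup (Finset.mem_Iic.mpr (hj₀min i hi))
  · apply Finset.sup_le
    intro j hj
    exact le_csSup hbdd
      ⟨indSub G j, Finset.mem_Iic.mp hj, subMinDeg_indSub G dt hdt hSL j⟩
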